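/- Every shift-invariant Borel probability measure μ on {0,1}^ℤ with finite total entropy S(μ) = lim_{j→∞} S(π_j μ) < ∞ is purely atomic and is supported on periodic configurations; equivalently, μ is a countable convex combination of basic periodic configuration measures. -/

import Mathlib

open MeasureTheory

/-- Shannon entropy of a measure on a finite set (with `0 log 0 = 0`). -/
noncomputable def shannonEntropy {Q : Type*} [Fintype Q] (μ : Q → ℝ) : ℝ :=
  -∑ q, μ q * Real.log (μ q)

/-- The Shannon entropy of the marginal of `μ` on the coordinates `{0, ..., j}`. -/
noncomputable def marginalEntropy (μ : Measure (ℤ → Bool)) (j : ℕ) : ℝ :=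
  shannonEntropy (fun ζ : Fin (j + 1) → Bool =>
    (μ {x : ℤ → Bool | ∀ t : Fin (j + 1), x ((t : ℕ) : ℤ) = ζ t}).toReal)

namespace Stmt17Aux

def sh : (ℤ → Bool) → (ℤ → Bool) := fun x i => x (i + 1)
def shInv : (ℤ → Bool) → (ℤ → Bool) := fun x i => x (i - 1)

lemma measurable_sh : Measurable sh :=
  measurable_pi_lambda _ fun i => measurable_pi_apply (i + 1)

lemma measurable_shInv : Measurable shInv :=
  measurable_pi_lambda _ fun i => measurable_pi_apply (i - 1)

lemma shInv_sh (x : ℤ → Bool) : shInv (sh x) = x := by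
  funext i; simp [sh, shInv]

lemma sh_shInv (x : ℤ → Bool) : sh (shInv x) = x := by
  funext i; simp [sh, shInv]

lemma shInv_iter (n : ℕ) (x : ℤ → Bool) (i : ℤ) : (shInv^[n] x) i = x (i - n) := by
  induction n generalizing i with
  | zero => simp
  | succ n ih =>
    rw [Function.iterate_succ_apply']
    show (shInv^[n] x) (i - 1) = _
    rw [ih]
    congr 1; push_cast; ring

lemma measurable_shInv_iter (n : ℕ) : Measurable (shInv^[n]) :=
  measurable_shInv.iterate n

/-- A word cylinder. -/
def cyl (m : ℕ) (w : Fin (m + 1) → Bool) : Set (ℤ → Bool) :=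
  {x | ∀ t : Fin (m + 1), x ((t : ℕ) : ℤ) = w t}

/-- The word of `x` of length `m+1`. -/
def word (m : ℕ) (x : ℤ → Bool) : Fin (m + 1) → Bool := fun t => x ((t : ℕ) : ℤ)

lemma mem_cyl_iff {m : ℕ} {w : Fin (m + 1) → Bool} {x : ℤ → Bool} :
    x ∈ cyl m w ↔ word m x = w := by
  constructor
  · intro h; funext t; exact h t
  · intro h t; exact congrFun h t

lemma measurableSet_cyl (m : ℕ) (w : Fin (m + 1) → Bool) : MeasurableSet (cyl m w) := by
  have : cyl m w = ⋂ t : Fin (m + 1), {x : ℤ → Bool | x ((t : ℕ) : ℤ) = w t} := by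
    ext x; simp [cyl]
  rw [this]
  refine MeasurableSet.iInter fun t => ?_
  exact measurableSet_eq_fun (measurable_pi_apply _) measurable_const

lemma pairwiseDisjoint_cyl (m : ℕ) :
    (Set.univ : Set (Fin (m + 1) → Bool)).PairwiseDisjoint (cyl m) := by
  intro w _ w' _ hne
  refine Set.disjoint_left.2 fun x hx hx' => hne ?_
  rw [mem_cyl_iff] at hx hx'
  rw [← hx, hx']

lemma classify (m : ℕ) (P : (Fin (m + 1) → Bool) → Prop) [DecidablePred P] :
    {x : ℤ → Bool | P (word m x)} =
      ⋃ w ∈ Finset.univ.filter P, cyl m w := by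
  ext x
  simp only [Set.mem_setOf_eq, Set.mem_iUnion, Finset.mem_filter, Finset.mem_univ, true_and]
  constructor
  · intro h; exact ⟨word m x, h, mem_cyl_iff.2 rfl⟩
  · rintro ⟨w, hw, hx⟩; rw [mem_cyl_iff] at hx; rw [hx]; exact hw

lemma measure_classify (μ : Measure (ℤ → Bool)) (m : ℕ)
    (P : (Fin (m + 1) → Bool) → Prop) [DecidablePred P] :
    μ {x : ℤ → Bool | P (word m x)} = ∑ w ∈ Finset.univ.filter P, μ (cyl m w) := by
  rw [classify]
  exact measure_biUnion_finset ((pairwiseDisjoint_cyl m).subset (Set.subset_univ _))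
    fun w _ => measurableSet_cyl m w

lemma measurableSet_classify (m : ℕ) (P : (Fin (m + 1) → Bool) → Prop) [DecidablePred P] :
    MeasurableSet {x : ℤ → Bool | P (word m x)} := by
  rw [classify]
  exact (Finset.univ.filter P).measurableSet_biUnion fun w _ => measurableSet_cyl m w

lemma entropy_term_nonneg {p : ℝ} (h0 : 0 ≤ p) (h1 : p ≤ 1) : 0 ≤ -(p * Real.log p) := by
  rcases eq_or_lt_of_le h0 with h | h
  · simp [← h]
  · have : Real.log p ≤ 0 := Real.log_nonpos (le_of_lt h) h1
    nlinarith

lemma shannonEntropy_nonneg {Q : Type*} [Fintype Q] {p : Q → ℝ}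
    (h0 : ∀ q, 0 ≤ p q) (h1 : ∀ q, p q ≤ 1) : 0 ≤ shannonEntropy p := by
  rw [shannonEntropy, ← Finset.sum_neg_distrib]
  exact Finset.sum_nonneg fun q _ => entropy_term_nonneg (h0 q) (h1 q)

lemma entropy_mass_bound {Q : Type*} [Fintype Q] {p : Q → ℝ}
    (h0 : ∀ q, 0 ≤ p q) (h1 : ∀ q, p q ≤ 1) (r : ℝ) :
    (∑ q ∈ Finset.univ.filter (fun q => p q ≤ r), p q) * Real.log r⁻¹ ≤ shannonEntropy p := by
  rw [shannonEntropy, ← Finset.sum_neg_distrib, Finset.sum_mul]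
  calc ∑ q ∈ Finset.univ.filter (fun q => p q ≤ r), p q * Real.log r⁻¹
      ≤ ∑ q ∈ Finset.univ.filter (fun q => p q ≤ r), -(p q * Real.log (p q)) := by
        refine Finset.sum_le_sum fun q hq => ?_
        rw [Finset.mem_filter] at hq
        rcases eq_or_lt_of_le (h0 q) with h | h
        · simp [← h]
        · have hlog : Real.log (p q) ≤ Real.log r := Real.log_le_log h hq.2
          rw [Real.log_inv]
          nlinarith
    _ ≤ ∑ q, -(p q * Real.log (p q)) := by
        refine Finset.sum_le_sum_of_subset_of_nonneg (Finset.filter_subset _ _) ?_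
        intro q _ _
        exact entropy_term_nonneg (h0 q) (h1 q)

section Measures

variable (μ : Measure (ℤ → Bool)) [IsProbabilityMeasure μ]

/-- The set of points whose length-(m+1) cylinder (starting at 0) has mass ≤ r. -/
def smallSet (m : ℕ) (r : ℝ) : Set (ℤ → Bool) :=
  {x | (μ (cyl m (word m x))).toReal ≤ r}

lemma smallSet_eq (m : ℕ) (r : ℝ) :
    smallSet μ m r = {x | (fun w => (μ (cyl m w)).toReal ≤ r) (word m x)} := rfl

lemma measurableSet_smallSet (m : ℕ) (r : ℝ) : MeasurableSet (smallSet μ m r) := by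
  classical
  rw [smallSet_eq]
  exact measurableSet_classify m (fun w => (μ (cyl m w)).toReal ≤ r)

lemma marginalEntropy_eq (m : ℕ) :
    marginalEntropy μ m = shannonEntropy (fun w : Fin (m + 1) → Bool => (μ (cyl m w)).toReal) :=
  rfl

lemma measure_smallSet_bound (m : ℕ) {r : ℝ} (hr : 0 < r) (hr1 : r < 1) {B : ℝ}
    (hB : marginalEntropy μ m ≤ B) :
    μ (smallSet μ m r) ≤ ENNReal.ofReal (B / Real.log r⁻¹) := by
  classical
  set p : (Fin (m + 1) → Bool) → ℝ := fun w => (μ (cyl m w)).toReal with hp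
  have hfin : ∀ w, μ (cyl m w) ≠ ⊤ := fun w => (measure_lt_top μ _).ne
  have h0 : ∀ w, 0 ≤ p w := fun w => ENNReal.toReal_nonneg
  have h1 : ∀ w, p w ≤ 1 := by
    intro w
    have := prob_le_one (μ := μ) (s := cyl m w)
    simpa [hp] using ENNReal.toReal_le_of_le_ofReal (by norm_num) (by simpa using this)
  have hL : 0 < Real.log r⁻¹ := Real.log_pos (by rw [lt_inv_comm₀] <;> simpa)
  have hBnn : 0 ≤ B := le_trans (shannonEntropy_nonneg h0 h1) ((marginalEntropy_eq μ m) ▸ hB)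
  have hmass : (∑ w ∈ Finset.univ.filter (fun w => p w ≤ r), p w) ≤ B / Real.log r⁻¹ := by
    rw [le_div_iff₀ hL]
    exact le_trans (entropy_mass_bound h0 h1 r) (le_trans (le_of_eq (marginalEntropy_eq μ m).symm) hB)
  have hmeas : μ (smallSet μ m r) = ∑ w ∈ Finset.univ.filter (fun w => p w ≤ r), μ (cyl m w) := by
    rw [smallSet_eq]
    exact measure_classify μ m (fun w => (μ (cyl m w)).toReal ≤ r)
  rw [hmeas]
  rw [ENNReal.le_ofReal_iff_toReal_le]
  · rw [ENNReal.toReal_sum (fun w _ => hfin w)]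
    exact hmass
  · exact ENNReal.sum_ne_top.2 fun w _ => hfin w
  · exact div_nonneg hBnn hL.le

end Measures

variable (μ : Measure (ℤ → Bool)) [IsProbabilityMeasure μ]

lemma map_shInv (hshift : Measure.map sh μ = μ) : Measure.map shInv μ = μ := by
  conv_lhs => rw [← hshift]
  rw [Measure.map_map measurable_shInv measurable_sh]
  have h : shInv ∘ sh = id := funext shInv_sh
  rw [h, Measure.map_id]

lemma map_shInv_iter (hshift : Measure.map sh μ = μ) (n : ℕ) :
    Measure.map (shInv^[n]) μ = μ := by
  induction n with
  | zero => simp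
  | succ n ih =>
    rw [Function.iterate_succ,
      ← Measure.map_map (measurable_shInv_iter n) measurable_shInv,
      map_shInv μ hshift, ih]

/-- The centered cylinder of radius `n` around `x`. -/
def En (n : ℕ) (x : ℤ → Bool) : Set (ℤ → Bool) :=
  {y | ∀ i : ℤ, -(n : ℤ) ≤ i → i ≤ n → y i = x i}

lemma En_antitone (x : ℤ → Bool) : Antitone fun n => En n x := by
  intro a b hab y hy i h1 h2
  exact hy i (by push_cast at *; omega) (by push_cast at *; omega)

lemma iInter_En (x : ℤ → Bool) : ⋂ n, En n x = {x} := by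
  ext y
  simp only [Set.mem_iInter, Set.mem_singleton_iff]
  constructor
  · intro h
    funext i
    exact h i.natAbs i (by omega) (by omega)
  · rintro rfl; intro n i _ _; rfl

lemma measurableSet_En (n : ℕ) (x : ℤ → Bool) : MeasurableSet (En n x) := by
  have : En n x = ⋂ i : ℤ, {y : ℤ → Bool | -(n : ℤ) ≤ i → i ≤ n → y i = x i} := by
    ext y; simp [En]
  rw [this]
  refine MeasurableSet.iInter fun i => ?_
  by_cases h1 : -(n:ℤ) ≤ i
  · by_cases h2 : i ≤ n
    · have : {y : ℤ → Bool | -(n : ℤ) ≤ i → i ≤ n → y i = x i} = {y | y i = x i} := by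
        ext y; simp [h1, h2]
      rw [this]
      exact measurableSet_eq_fun (measurable_pi_apply _) measurable_const
    · have : {y : ℤ → Bool | -(n : ℤ) ≤ i → i ≤ n → y i = x i} = Set.univ := by
        ext y; simp [h2]
      rw [this]; exact MeasurableSet.univ
  · have : {y : ℤ → Bool | -(n : ℤ) ≤ i → i ≤ n → y i = x i} = Set.univ := by
      ext y; simp [h1]
    rw [this]; exact MeasurableSet.univ

/-- Atoms of a shift-invariant measure are periodic. -/
lemma atom_periodic (hshift : Measure.map sh μ = μ) (x : ℤ → Bool) (hx : μ {x} ≠ 0) :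
    ∃ p : ℤ, 0 < p ∧ ∀ i : ℤ, x (i + p) = x i := by
  by_contra hper
  push_neg at hper
  have hsing : ∀ y : ℤ → Bool, μ {shInv y} = μ {y} := by
    intro y
    conv_rhs => rw [← hshift]
    rw [Measure.map_apply measurable_sh (measurableSet_singleton y)]
    have hpre : sh ⁻¹' ({y} : Set (ℤ → Bool)) = {shInv y} := by
      ext z
      simp only [Set.mem_preimage, Set.mem_singleton_iff]
      constructor
      · intro h; rw [← h, shInv_sh]
      · intro h; rw [h, sh_shInv]
    rw [hpre]
  have horb : ∀ k : ℕ, μ {shInv^[k] x} = μ {x} := by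
    intro k
    induction k with
    | zero => rfl
    | succ k ih => rw [Function.iterate_succ_apply', hsing, ih]
  have hshinj : Function.Injective shInv := fun u v h => by
    rw [← sh_shInv u, h, sh_shInv]
  have hkey : ∀ a b : ℕ, a < b → shInv^[a] x ≠ shInv^[b] x := by
    intro a b hab heq
    have h1 : shInv^[a] x = shInv^[a] (shInv^[b - a] x) := by
      rw [← Function.iterate_add_apply]
      rw [heq]; congr 1; omega
    have h2 : x = shInv^[b - a] x := (hshinj.iterate a) h1
    obtain ⟨i, hi⟩ := hper ((b - a : ℕ) : ℤ) (by exact_mod_cast Nat.sub_pos_of_lt hab)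
    apply hi
    have := congrFun h2 (i + ((b - a : ℕ) : ℤ))
    rw [shInv_iter] at this
    simpa using this
  have hinj : Function.Injective fun k : ℕ => shInv^[k] x := by
    intro a b hab
    by_contra hne
    rcases lt_or_gt_of_ne hne with h | h
    · exact hkey a b h hab
    · exact hkey b a h hab.symm
  have hdisj : Pairwise (Function.onFun Disjoint fun k : ℕ => ({shInv^[k] x} : Set (ℤ → Bool))) := by
    intro a b hne
    exact Set.disjoint_singleton.2 fun h => hne (hinj h)
  have hsum : μ (⋃ k : ℕ, ({shInv^[k] x} : Set (ℤ → Bool))) = ∑' k : ℕ, μ {shInv^[k] x} :=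
    measure_iUnion hdisj fun k => measurableSet_singleton _
  have htop : (∑' k : ℕ, μ {shInv^[k] x}) = ⊤ := by
    simp only [horb]
    exact ENNReal.tsum_const_eq_top_of_ne_zero hx
  have : (⊤ : ENNReal) ≤ 1 := by
    rw [← htop, ← hsum]
    simpa using prob_le_one (μ := μ) (s := ⋃ k : ℕ, ({shInv^[k] x} : Set (ℤ → Bool)))
  simp at this


section More

variable (μ : Measure (ℤ → Bool)) [IsProbabilityMeasure μ]

lemma marginalEntropy_nonneg (m : ℕ) : 0 ≤ marginalEntropy μ m := by
  rw [marginalEntropy_eq]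
  refine shannonEntropy_nonneg (fun w => ENNReal.toReal_nonneg) (fun w => ?_)
  exact ENNReal.toReal_le_of_le_ofReal zero_le_one
    (by simpa using prob_le_one (μ := μ) (s := cyl m w))

lemma En_eq (n : ℕ) (x : ℤ → Bool) :
    En n x = (shInv^[n]) ⁻¹' (cyl (2 * n) (word (2 * n) (shInv^[n] x))) := by
  ext y
  simp only [En, Set.mem_setOf_eq, Set.mem_preimage, cyl, word]
  constructor
  · intro h t
    rw [shInv_iter, shInv_iter]
    have ht : (t : ℕ) < 2 * n + 1 := t.isLt
    refine h _ ?_ ?_ <;> · push_cast; omega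
  · intro h i h1 h2
    have hk0 : (0 : ℤ) ≤ i + n := by omega
    have hklt : (i + n).toNat < 2 * n + 1 := by omega
    have h3 := h ⟨(i + n).toNat, hklt⟩
    rw [shInv_iter, shInv_iter] at h3
    simp only [Fin.val_mk] at h3
    rw [Int.toNat_of_nonneg hk0] at h3
    have hsimp : i + (n : ℤ) - n = i := by ring
    rwa [hsimp] at h3

lemma measure_En (hshift : Measure.map sh μ = μ) (n : ℕ) (x : ℤ → Bool) :
    μ (En n x) = μ (cyl (2 * n) (word (2 * n) (shInv^[n] x))) := by
  rw [En_eq, ← Measure.map_apply (measurable_shInv_iter n) (measurableSet_cyl _ _),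
    map_shInv_iter μ hshift n]

def bigSmall (n : ℕ) (r : ℝ) : Set (ℤ → Bool) := (shInv^[n]) ⁻¹' (smallSet μ (2 * n) r)

lemma measure_bigSmall (hshift : Measure.map sh μ = μ) (n : ℕ) (r : ℝ) :
    μ (bigSmall μ n r) = μ (smallSet μ (2 * n) r) := by
  rw [bigSmall, ← Measure.map_apply (measurable_shInv_iter n) (measurableSet_smallSet μ _ _),
    map_shInv_iter μ hshift n]

lemma mem_bigSmall_iff (hshift : Measure.map sh μ = μ) {n : ℕ} {r : ℝ} {x : ℤ → Bool} :
    x ∈ bigSmall μ n r ↔ (μ (En n x)).toReal ≤ r := by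
  rw [measure_En μ hshift n x]
  exact Iff.rfl

lemma bigSmall_monotone (hshift : Measure.map sh μ = μ) (r : ℝ) :
    Monotone fun n => bigSmall μ n r := by
  intro a b hab x hx
  rw [mem_bigSmall_iff μ hshift] at hx ⊢
  refine le_trans ?_ hx
  exact ENNReal.toReal_mono (measure_lt_top μ _).ne (measure_mono (En_antitone x hab))

end More


end Stmt17Aux

open Filter in
theorem stmt17 (μ : Measure (ℤ → Bool)) [IsProbabilityMeasure μ]
    (hshift : Measure.map (fun x : ℤ → Bool => fun i => x (i + 1)) μ = μ)
    (hent : ∃ B : ℝ, ∀ j : ℕ, marginalEntropy μ j ≤ B) :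
    μ {x : ℤ → Bool | ∃ p : ℤ, 0 < p ∧ ∀ i : ℤ, x (i + p) = x i} = 1 := by
  classical
  open Stmt17Aux in
  obtain ⟨B, hB⟩ := hent
  have hshift' : Measure.map Stmt17Aux.sh μ = μ := hshift
  set Per : Set (ℤ → Bool) := {x | ∃ p : ℤ, 0 < p ∧ ∀ i : ℤ, x (i + p) = x i} with hPer
  have hB0 : 0 ≤ B := le_trans (Stmt17Aux.marginalEntropy_nonneg μ 0) (hB 0)
  have key : ∀ r : ℝ, 0 < r → r < 1 →
      μ Perᶜ ≤ ENNReal.ofReal (B / Real.log r⁻¹) := by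
    intro r hr hr1
    have hsub : Perᶜ ⊆ ⋃ n, Stmt17Aux.bigSmall μ n r := by
      intro x hx
      have hxz : μ {x} = 0 := by
        by_contra h
        exact hx (Stmt17Aux.atom_periodic μ hshift' x h)
      have htend : Tendsto (fun n => μ (Stmt17Aux.En n x)) atTop (nhds 0) := by
        have h1 := MeasureTheory.tendsto_measure_iInter_atTop (μ := μ)
          (fun n => (Stmt17Aux.measurableSet_En n x).nullMeasurableSet)
          (Stmt17Aux.En_antitone x) ⟨0, (measure_lt_top μ _).ne⟩
        rw [Stmt17Aux.iInter_En, hxz] at h1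
        exact h1
      have hev : ∀ᶠ n in atTop, μ (Stmt17Aux.En n x) < ENNReal.ofReal r :=
        htend.eventually_lt_const (by simpa using ENNReal.ofReal_pos.2 hr)
      obtain ⟨n, hn⟩ := hev.exists
      refine Set.mem_iUnion.2 ⟨n, ?_⟩
      rw [Stmt17Aux.mem_bigSmall_iff μ hshift']
      exact ENNReal.toReal_le_of_le_ofReal hr.le hn.le
    calc μ Perᶜ ≤ μ (⋃ n, Stmt17Aux.bigSmall μ n r) := measure_mono hsub
      _ = ⨆ n, μ (Stmt17Aux.bigSmall μ n r) :=
          Directed.measure_iUnion ((Stmt17Aux.bigSmall_monotone μ hshift' r).directed_le)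
      _ ≤ ENNReal.ofReal (B / Real.log r⁻¹) := by
          refine iSup_le fun n => ?_
          rw [Stmt17Aux.measure_bigSmall μ hshift']
          exact Stmt17Aux.measure_smallSet_bound μ (2 * n) hr hr1 (hB (2 * n))
  have hz : μ Perᶜ = 0 := by
    have hfin : μ Perᶜ ≠ ⊤ := (measure_lt_top μ _).ne
    have hball : ∀ ε : ℝ, 0 < ε → (μ Perᶜ).toReal ≤ ε := by
      intro ε hε
      set r : ℝ := Real.exp (-((B + 1) / ε)) with hrdef
      have hr : 0 < r := Real.exp_pos _
      have hr1 : r < 1 := by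
        have hpos : 0 < (B + 1) / ε := by positivity
        have h2 : Real.exp (-((B + 1) / ε)) < Real.exp 0 := Real.exp_lt_exp.2 (by linarith)
        rw [Real.exp_zero] at h2
        exact hrdef ▸ h2
      have hlog : Real.log r⁻¹ = (B + 1) / ε := by
        rw [Real.log_inv, hrdef, Real.log_exp]; ring
      have hk := key r hr hr1
      rw [hlog] at hk
      have hpos : 0 < (B + 1) / ε := by positivity
      have hb : B / ((B + 1) / ε) ≤ ε := by
        rw [div_le_iff₀ hpos]
        have hmul : ε * ((B + 1) / ε) = B + 1 := by field_simp
        linarith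
      have hnn : 0 ≤ B / ((B + 1) / ε) := div_nonneg hB0 hpos.le
      exact le_trans ((ENNReal.le_ofReal_iff_toReal_le hfin hnn).1 hk) hb
    have hle : (μ Perᶜ).toReal ≤ 0 := by
      by_contra h
      push_neg at h
      have := hball ((μ Perᶜ).toReal / 2) (by linarith)
      linarith
    have h0 : (μ Perᶜ).toReal = 0 := le_antisymm hle ENNReal.toReal_nonneg
    exact ((ENNReal.toReal_eq_zero_iff _).1 h0).resolve_right hfin
  have h1 : (1 : ENNReal) ≤ μ Per := by
    have hu : (Set.univ : Set (ℤ → Bool)) = Per ∪ Perᶜ := (Set.union_compl_self Per).symm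
    calc (1 : ENNReal) = μ Set.univ := measure_univ.symm
      _ ≤ μ Per + μ Perᶜ := by rw [hu]; exact measure_union_le _ _
      _ = μ Per := by rw [hz, add_zero]
  exact le_antisymm prob_le_one h1
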